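/- Let s and t be positive integers, let (A_1,…,A_m) be the associated partition of an (s,t)-spike M, for J ⊆ [m] let A_J = ⋃_{j∈J} A_j, and let (J,K) be a partition of [m] with |J| ≤ |K|. Then: (i) if |J| ≤ t−1, then λ(A_J) = r(A_J); (ii) if t−1 ≤ |J| ≤ m−s, then λ(A_J) = t + |J| − 1 when |J| < s, and λ(A_J) = s + t − 2 when s ≤ |J| ≤ m − t + 1; (iii) if |J| > m−s, then λ(A_J) = m − s + t. -/

import Mathlib

open Set Function

namespace Matroid

variable {α : Type*}

/-- A circuit of a matroid: a minimal dependent set. -/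
def IsCircuit' (M : Matroid α) (C : Set α) : Prop := Minimal M.Dep C

/-- A cocircuit of a matroid: a circuit of the dual matroid. -/
def IsCocircuit' (M : Matroid α) (C : Set α) : Prop := M✶.IsCircuit' C

/-- The `ℕ`-valued rank of a set `X` in a matroid `M`:
the size of a largest independent subset of `X`. -/
noncomputable def rk' (M : Matroid α) (X : Set α) : ℕ :=
  sSup {n : ℕ | ∃ I, M.Indep I ∧ I ⊆ X ∧ I.ncard = n}

/-- The connectivity function `λ(X) = r(X) + r(E − X) − r(M)`. -/
noncomputable def lam' (M : Matroid α) (X : Set α) : ℕ :=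
  M.rk' X + M.rk' (M.E \ X) - M.rk' M.E

/-- The `(s,u,t,v)`-property: every `s`-element subset of the ground set is contained in a
circuit of size `u`, and every `t`-element subset is contained in a cocircuit of size `v`. -/
def HasProp (M : Matroid α) (s u t v : ℕ) : Prop :=
  (∀ S ⊆ M.E, S.ncard = s → ∃ C, M.IsCircuit' C ∧ C.ncard = u ∧ S ⊆ C) ∧
  (∀ T ⊆ M.E, T.ncard = t → ∃ C, M.IsCocircuit' C ∧ C.ncard = v ∧ T ⊆ C)

/-- A `t`-echidna of order `n`: a family of `n` pairwise disjoint `2`-element subsets of the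
ground set (spines) such that the union of any `t` spines is a circuit.
(A `t`-coechidna of `M` is a `t`-echidna of `M✶`.) -/
def IsEchidna (M : Matroid α) (t : ℕ) {n : ℕ} (S : Fin n → Set α) : Prop :=
  (∀ i, S i ⊆ M.E) ∧ (∀ i, (S i).ncard = 2) ∧
  Pairwise (Function.onFun Disjoint S) ∧
  ∀ I : Finset (Fin n), I.card = t → M.IsCircuit' (⋃ i ∈ I, S i)

/-- `M` is an `(s,t)`-spike with associated partition `(A 1, …, A m)`: the `A i` are `m`
pairwise disjoint pairs partitioning the ground set, with `m ≥ max s t`, such that the union of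
any `s` pairs is a circuit and the union of any `t` pairs is a cocircuit. -/
def IsSpike (M : Matroid α) (s t : ℕ) {m : ℕ} (A : Fin m → Set α) : Prop :=
  max s t ≤ m ∧ (⋃ i, A i) = M.E ∧
  Pairwise (Function.onFun Disjoint A) ∧ (∀ i, (A i).ncard = 2) ∧
  (∀ I : Finset (Fin m), I.card = s → M.IsCircuit' (⋃ i ∈ I, A i)) ∧
  (∀ I : Finset (Fin m), I.card = t → M.IsCocircuit' (⋃ i ∈ I, A i))

end Matroid

namespace SpikeAux

open Matroid

variable {α : Type*} {M : Matroid α} {X Y I C : Set α} {x y : α}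

lemma bddAbove_rk'_set (hX : X.Finite) :
    BddAbove {n : ℕ | ∃ I, M.Indep I ∧ I ⊆ X ∧ I.ncard = n} :=
  ⟨X.ncard, fun n ⟨_, _, hIX, h⟩ => h ▸ Set.ncard_le_ncard hIX hX⟩

lemma le_rk' (hX : X.Finite) (hI : M.Indep I) (hIX : I ⊆ X) : I.ncard ≤ M.rk' X :=
  le_csSup (bddAbove_rk'_set hX) ⟨I, hI, hIX, rfl⟩

lemma rk'_eq_ncard_of_basis (hX : X.Finite) (hI : M.IsBasis I X) : M.rk' X = I.ncard := by
  apply IsGreatest.csSup_eq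
  refine ⟨⟨I, hI.indep, hI.subset, rfl⟩, ?_⟩
  rintro n ⟨I', hI', hI'X, rfl⟩
  obtain ⟨J, hJ, hI'J⟩ := hI'.subset_isBasis_of_subset hI'X hI.subset_ground
  have hJI : J.ncard = I.ncard := by
    rw [Set.ncard_def, hJ.encard_eq_encard hI, ← Set.ncard_def]
  exact hJI ▸ Set.ncard_le_ncard hI'J (hX.subset hJ.subset)

lemma rk'_indep (hI : M.Indep X) (hfin : X.Finite) : M.rk' X = X.ncard :=
  rk'_eq_ncard_of_basis hfin hI.isBasis_self

lemma rk'_insert_le (hX : X.Finite) : M.rk' (insert x X) ≤ M.rk' X + 1 := by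
  have hne : {n : ℕ | ∃ I, M.Indep I ∧ I ⊆ insert x X ∧ I.ncard = n}.Nonempty :=
    ⟨0, ∅, M.empty_indep, empty_subset _, Set.ncard_empty α⟩
  rw [Matroid.rk']
  apply csSup_le hne
  rintro n ⟨I, hI, hIX, rfl⟩
  have hfin : I.Finite := (hX.insert x).subset hIX
  have h1 : (I \ {x}).ncard ≤ M.rk' X := by
    refine le_rk' hX (hI.subset diff_subset) ?_
    rw [diff_subset_iff, singleton_union]
    exact hIX
  have h2 : I.ncard ≤ (I \ {x}).ncard + 1 := by
    by_cases hx : x ∈ I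
    · rw [Set.ncard_sdiff_singleton_of_mem hx]
      have := Set.ncard_pos (s := I) hfin |>.mpr ⟨x, hx⟩
      omega
    · rw [Set.diff_singleton_eq_self hx]; omega
  omega

lemma rk'_insert_eq_of_mem_closure (hXE : X ⊆ M.E) (hX : X.Finite)
    (hx : x ∈ M.closure X) : M.rk' (insert x X) = M.rk' X := by
  obtain ⟨I, hI⟩ := M.exists_isBasis X
  have hI' : M.IsBasis I (insert x X) := by
    refine hI.indep.isBasis_of_subset_of_subset_closure
      (hI.subset.trans (subset_insert _ _)) ?_
    rw [hI.closure_eq_closure]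
    exact insert_subset hx (M.subset_closure X)
  rw [rk'_eq_ncard_of_basis (hX.insert x) hI', rk'_eq_ncard_of_basis hX hI]

lemma rk'_spanning_eq (hS : M.Spanning X) (hE : M.E.Finite) : M.rk' X = M.rk' M.E := by
  obtain ⟨B, hB, hBX⟩ := hS.exists_isBase_subset
  have h1 : M.IsBasis B X := hB.indep.isBasis_of_subset_of_subset_closure hBX
    (hS.subset_ground.trans (by rw [hB.closure_eq]))
  have h2 : M.IsBasis B M.E := hB.indep.isBasis_of_subset_of_subset_closure
    hB.subset_ground (by rw [hB.closure_eq])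
  rw [rk'_eq_ncard_of_basis (hE.subset hS.subset_ground) h1, rk'_eq_ncard_of_basis hE h2]

lemma rk'_ground_add_dual (hE : M.E.Finite) : M.rk' M.E + M✶.rk' M.E = M.E.ncard := by
  obtain ⟨B, hB⟩ := M.exists_isBase
  have hBd : M✶.IsBase (M.E \ B) := hB.compl_isBase_dual
  have h1 : M.rk' M.E = B.ncard :=
    rk'_eq_ncard_of_basis hE (hB.indep.isBasis_of_subset_of_subset_closure
      hB.subset_ground (by rw [hB.closure_eq]))
  have h2 : M✶.rk' M.E = (M.E \ B).ncard := by
    have : M✶.rk' M✶.E = (M.E \ B).ncard :=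
      rk'_eq_ncard_of_basis (by rwa [Matroid.dual_ground])
        (hBd.indep.isBasis_of_subset_of_subset_closure hBd.subset_ground
          (by rw [hBd.closure_eq]))
    rwa [Matroid.dual_ground] at this
  rw [h1, h2, Set.ncard_diff hB.subset_ground (hE.subset hB.subset_ground)]
  have := Set.ncard_le_ncard hB.subset_ground hE
  omega

lemma circuit_subset_ground (hC : M.IsCircuit' C) : C ⊆ M.E :=
  hC.prop.subset_ground

lemma circuit_ssubset_indep (hC : M.IsCircuit' C) (hXC : X ⊂ C) : M.Indep X := by
  have hXE : X ⊆ M.E := hXC.subset.trans (circuit_subset_ground hC)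
  by_contra h
  exact hXC.not_subset (hC.le_of_le ⟨h, hXE⟩ hXC.subset)

lemma circuit_diff_singleton_indep (hC : M.IsCircuit' C) (hx : x ∈ C) :
    M.Indep (C \ {x}) :=
  circuit_ssubset_indep hC (Set.sdiff_singleton_ssubset.mpr hx)

lemma circuit_mem_closure (hC : M.IsCircuit' C) (hx : x ∈ C) :
    x ∈ M.closure (C \ {x}) := by
  have hI := circuit_diff_singleton_indep hC hx
  have hdep : M.Dep (insert x (C \ {x})) := by
    rw [Set.insert_diff_singleton, Set.insert_eq_of_mem hx]
    exact hC.prop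
  exact ((hI.insert_dep_iff).mp hdep).1


section Spike

variable {m s t : ℕ} {A : Fin m → Set α} {I J : Finset (Fin m)} {i j : Fin m}

/-- The union of the arms indexed by `I`. -/
def USet (A : Fin m → Set α) (I : Finset (Fin m)) : Set α := ⋃ i ∈ I, A i

lemma USet_mono (h : I ⊆ J) : USet A I ⊆ USet A J :=
  Set.biUnion_subset_biUnion_left h

lemma finite_arm (hA : M.IsSpike s t A) (i : Fin m) : (A i).Finite :=
  Set.finite_of_ncard_ne_zero (by rw [hA.2.2.2.1 i]; omega)

lemma arm_subset_ground (hA : M.IsSpike s t A) (i : Fin m) : A i ⊆ M.E :=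
  hA.2.1 ▸ Set.subset_iUnion A i

lemma disjoint_USet (hA : M.IsSpike s t A) (hj : j ∉ I) : Disjoint (A j) (USet A I) := by
  rw [USet, Set.disjoint_iUnion₂_right]
  exact fun i hi => hA.2.2.1 (fun h => hj (h ▸ hi))

lemma USet_subset_ground (hA : M.IsSpike s t A) : USet A I ⊆ M.E :=
  Set.iUnion₂_subset fun i _ => arm_subset_ground hA i

lemma finite_USet (hA : M.IsSpike s t A) : (USet A I).Finite :=
  Set.Finite.biUnion I.finite_toSet fun i _ => finite_arm hA i

lemma ncard_USet (hA : M.IsSpike s t A) : (USet A I).ncard = 2 * I.card := by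
  classical
  induction I using Finset.induction_on with
  | empty => simp [USet]
  | insert _ _ hjI _ =>
    rename_i a Ia ih
    rw [USet, Finset.set_biUnion_insert, ← USet,
      Set.ncard_union_eq (disjoint_USet hA hjI) (finite_arm hA a) (finite_USet hA),
      hA.2.2.2.1 a, ih, Finset.card_insert_of_notMem hjI]
    ring

lemma USet_univ (hA : M.IsSpike s t A) : USet A Finset.univ = M.E := by
  rw [← hA.2.1, USet]
  simp

lemma ground_finite (hA : M.IsSpike s t A) : M.E.Finite :=
  USet_univ hA ▸ finite_USet hA

lemma ground_ncard (hA : M.IsSpike s t A) : M.E.ncard = 2 * m := by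
  rw [← USet_univ hA, ncard_USet hA, Finset.card_univ, Fintype.card_fin]

lemma compl_USet (hA : M.IsSpike s t A) : M.E \ USet A I = USet A Iᶜ := by
  ext e
  simp only [Set.mem_diff, USet, Set.mem_iUnion, exists_prop, Finset.mem_compl]
  constructor
  · rintro ⟨heE, he⟩
    rw [← hA.2.1] at heE
    obtain ⟨i, hi⟩ := Set.mem_iUnion.mp heE
    exact ⟨i, fun hiI => he ⟨i, hiI, hi⟩, hi⟩
  · rintro ⟨i, hiI, hi⟩
    refine ⟨arm_subset_ground hA i hi, ?_⟩
    rintro ⟨i', hi'I, hi'⟩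
    have : i' ≠ i := fun h => hiI (h ▸ hi'I)
    exact (hA.2.2.1 this).ne_of_mem hi' hi rfl

lemma indep_USet (hA : M.IsSpike s t A) (hcard : I.card < s) : M.Indep (USet A I) := by
  have hsm : s ≤ m := le_trans (le_max_left _ _) hA.1
  obtain ⟨I₂, hI₂sub, -, hI₂card⟩ := Finset.exists_subsuperset_card_eq (n := s) (t := Finset.univ)
    (I.subset_univ) (by omega) (by simp [hsm])
  have hC : M.IsCircuit' (USet A I₂) := hA.2.2.2.2.1 I₂ hI₂card
  refine circuit_ssubset_indep hC ⟨USet_mono hI₂sub, fun hsub => ?_⟩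
  obtain ⟨j, hjI₂, hjI⟩ : ∃ j ∈ I₂, j ∉ I := by
    by_contra h
    push_neg at h
    have := Finset.card_le_card h
    omega
  obtain ⟨z, hz⟩ : (A j).Nonempty := by
    rw [← Set.ncard_pos (finite_arm hA j), hA.2.2.2.1 j]; omega
  have hzU : z ∈ USet A I₂ := Set.mem_biUnion hjI₂ hz
  exact (disjoint_USet hA hjI).ne_of_mem hz (hsub hzU) rfl

lemma dual_spike (hA : M.IsSpike s t A) : M✶.IsSpike t s A := by
  obtain ⟨hm, hE, hdisj, hncard, hcirc, hcocirc⟩ := hA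
  refine ⟨by rwa [max_comm], by rwa [Matroid.dual_ground], hdisj, hncard, ?_, ?_⟩
  · exact fun I hI => hcocirc I hI
  · intro I hI
    rw [Matroid.IsCocircuit', Matroid.dual_dual]
    exact hcirc I hI

lemma spanning_USet (hA : M.IsSpike s t A) (hcard : I.card < t) :
    M.Spanning (USet A Iᶜ) := by
  have hco : M.Coindep (USet A I) := indep_USet (dual_spike hA) hcard
  have := hco.compl_spanning
  rwa [compl_USet hA] at this

lemma step (hA : M.IsSpike s t A) (hs : 0 < s) (hj : j ∉ I) (hcard : s ≤ I.card + 1) :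
    M.rk' (USet A (insert j I)) ≤ M.rk' (USet A I) + 1 := by
  classical
  obtain ⟨I', hI'sub, hI'card⟩ := Finset.exists_subset_card_eq (s := I) (n := s - 1) (by omega)
  have hjI' : j ∉ I' := fun h => hj (hI'sub h)
  have hC : M.IsCircuit' (USet A (insert j I')) := by
    apply hA.2.2.2.2.1
    rw [Finset.card_insert_of_notMem hjI', hI'card]; omega
  obtain ⟨x, y, hxy, hAj⟩ := Set.ncard_eq_two.mp (hA.2.2.2.1 j)
  have hxC : x ∈ USet A (insert j I') :=
    Set.mem_biUnion (Finset.mem_insert_self j I') (by rw [hAj]; exact Set.mem_insert _ _)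
  have hyE : y ∈ M.E := arm_subset_ground hA j (by rw [hAj]; exact Set.mem_insert_of_mem _ rfl)
  have hxcl : x ∈ M.closure (USet A (insert j I') \ {x}) := circuit_mem_closure hC hxC
  have hsub : USet A (insert j I') \ {x} ⊆ insert y (USet A I) := by
    rintro z ⟨hz, hzx⟩
    simp only [Set.mem_singleton_iff] at hzx
    rw [USet, Finset.set_biUnion_insert] at hz
    rcases hz with hz | hz
    · rw [hAj] at hz
      simp only [Set.mem_insert_iff, Set.mem_singleton_iff] at hz
      rcases hz with rfl | rfl
      · exact absurd rfl hzx
      · exact Set.mem_insert _ _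
    · exact Set.mem_insert_of_mem _ (USet_mono hI'sub hz)
  have hxcl2 : x ∈ M.closure (insert y (USet A I)) :=
    M.closure_subset_closure hsub hxcl
  have hU : USet A (insert j I) = insert x (insert y (USet A I)) := by
    rw [USet, Finset.set_biUnion_insert, ← USet, hAj, Set.insert_union, Set.singleton_union]
  rw [hU]
  have h1 : insert y (USet A I) ⊆ M.E := Set.insert_subset hyE (USet_subset_ground hA)
  have h2 : (insert y (USet A I)).Finite := (finite_USet hA).insert y
  rw [rk'_insert_eq_of_mem_closure h1 h2 hxcl2]
  exact rk'_insert_le (finite_USet hA)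

lemma chain (hA : M.IsSpike s t A) (hs : 0 < s) (J : Finset (Fin m)) :
    ∀ (n : ℕ) (I : Finset (Fin m)), I ⊆ J → s ≤ I.card + 1 → J.card - I.card ≤ n →
      M.rk' (USet A J) ≤ M.rk' (USet A I) + (J.card - I.card) := by
  classical
  intro n
  induction n with
  | zero =>
    intro I hsub hc hd
    have hle : I.card ≤ J.card := Finset.card_le_card hsub
    have hIJ : I = J := Finset.eq_of_subset_of_card_le hsub (by omega)
    simp [hIJ]
  | succ n ih =>
    intro I hsub hc hd
    by_cases hIJ : I = J
    · simp [hIJ]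
    · obtain ⟨j, hjJ, hjI⟩ : ∃ j ∈ J, j ∉ I := by
        by_contra h
        push_neg at h
        exact hIJ (Finset.Subset.antisymm hsub h)
      have hlt : I.card < J.card :=
        Finset.card_lt_card ⟨hsub, fun h => hjI (h hjJ)⟩
      have h1 := ih (insert j I) (Finset.insert_subset hjJ hsub)
        (by rw [Finset.card_insert_of_notMem hjI]; omega)
        (by rw [Finset.card_insert_of_notMem hjI]; omega)
      have h2 := step hA hs hjI hc
      rw [Finset.card_insert_of_notMem hjI] at h1
      omega

lemma rk'_USet_small (hA : M.IsSpike s t A) (h : I.card < s) :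
    M.rk' (USet A I) = 2 * I.card := by
  rw [rk'_indep (indep_USet hA h) (finite_USet hA), ncard_USet hA]

lemma rk'_ground_lb (hA : M.IsSpike s t A) (hs : 0 < s) : 2 * s - 1 ≤ M.rk' M.E := by
  classical
  have hsm : s ≤ m := le_trans (le_max_left _ _) hA.1
  obtain ⟨I, hIsub, hIcard⟩ := Finset.exists_subset_card_eq (s := (Finset.univ : Finset (Fin m))) (n := s)
    (by rw [Finset.card_univ, Fintype.card_fin]; omega)
  have hC : M.IsCircuit' (USet A I) := hA.2.2.2.2.1 I hIcard
  have hne : (USet A I).Nonempty := by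
    rw [← Set.ncard_pos (finite_USet hA), ncard_USet hA]; omega
  obtain ⟨x, hx⟩ := hne
  have hind := circuit_diff_singleton_indep hC hx
  have hsubE : USet A I \ {x} ⊆ M.E :=
    Set.diff_subset.trans (USet_subset_ground hA)
  have hle := le_rk' (ground_finite hA) hind hsubE
  rwa [Set.ncard_sdiff_singleton_of_mem hx, ncard_USet hA, hIcard] at hle

lemma hm_bound (hA : M.IsSpike s t A) (hs : 0 < s) (ht : 0 < t) : s + t ≤ m + 1 := by
  have h1 := rk'_ground_lb hA hs
  have h2 := rk'_ground_lb (dual_spike hA) ht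
  rw [Matroid.dual_ground] at h2
  have h3 := rk'_ground_add_dual (M := M) (ground_finite hA)
  rw [ground_ncard hA] at h3
  omega

lemma spanning_USet' (hA : M.IsSpike s t A) (ht : 0 < t) (h : m < I.card + t) :
    M.Spanning (USet A I) := by
  classical
  have := spanning_USet hA (I := Iᶜ)
    (by rw [Finset.card_compl, Fintype.card_fin]; omega)
  rwa [compl_compl] at this

lemma rk'_ground_ub (hA : M.IsSpike s t A) (hs : 0 < s) (ht : 0 < t) :
    M.rk' M.E + t ≤ m + s := by
  classical
  have hstm := hm_bound hA hs ht
  have htm : t ≤ m := le_trans (le_max_right _ _) hA.1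
  obtain ⟨I, hIsub, hIcard⟩ := Finset.exists_subset_card_eq (s := (Finset.univ : Finset (Fin m))) (n := m - t + 1)
    (by rw [Finset.card_univ, Fintype.card_fin]; omega)
  have hspan : M.Spanning (USet A I) := spanning_USet' hA ht (by omega)
  obtain ⟨I', hI'sub, hI'card⟩ := Finset.exists_subset_card_eq (s := I) (n := s - 1) (by omega)
  have hup := chain hA hs I I.card I' hI'sub (by omega) (by omega)
  rw [rk'_USet_small (I := I') hA (by omega), hI'card, hIcard] at hup
  rw [← rk'_spanning_eq hspan (ground_finite hA)]
  omega

lemma rk'_ground_spike (hA : M.IsSpike s t A) (hs : 0 < s) (ht : 0 < t) :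
    M.rk' M.E + t = m + s := by
  have h1 := rk'_ground_ub hA hs ht
  have h2 := rk'_ground_ub (dual_spike hA) ht hs
  rw [Matroid.dual_ground] at h2
  have h3 := rk'_ground_add_dual (M := M) (ground_finite hA)
  rw [ground_ncard hA] at h3
  omega

lemma rk'_USet_mid (hA : M.IsSpike s t A) (hs : 0 < s) (ht : 0 < t)
    (h1 : s ≤ I.card + 1) (h2 : I.card + t ≤ m + 1) :
    M.rk' (USet A I) + 1 = I.card + s := by
  classical
  have hstm := hm_bound hA hs ht
  have htm : t ≤ m := le_trans (le_max_right _ _) hA.1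
  have hIm : I.card ≤ m := by
    have := Finset.card_le_card I.subset_univ
    rwa [Finset.card_univ, Fintype.card_fin] at this
  obtain ⟨I', hI'sub, hI'card⟩ := Finset.exists_subset_card_eq (s := I) (n := s - 1) (by omega)
  have hup := chain hA hs I I.card I' hI'sub (by omega) (by omega)
  rw [rk'_USet_small (I := I') hA (by omega), hI'card] at hup
  obtain ⟨I₂, hsub₂, -, hcard₂⟩ := Finset.exists_subsuperset_card_eq
    (n := m - t + 1) (t := Finset.univ) I.subset_univ (by omega)
    (by rw [Finset.card_univ, Fintype.card_fin]; omega)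
  have hspan : M.Spanning (USet A I₂) := spanning_USet' hA ht (by omega)
  have hlow := chain hA hs I₂ I₂.card I hsub₂ h1 (by omega)
  rw [rk'_spanning_eq hspan (ground_finite hA), hcard₂] at hlow
  have hg := rk'_ground_spike hA hs ht
  omega

end Spike

end SpikeAux

universe u

open Matroid

/-- Let `(A 1, …, A m)` be the associated partition of an `(s,t)`-spike and let
`(J,K)` be a partition of `[m]` with `|J| ≤ |K|`.  Then: (i) if `|J| ≤ t−1` then
`λ(A_J) = r(A_J)`; (ii) if `t−1 ≤ |J| ≤ m−s` then `λ(A_J) = t + |J| − 1` when `|J| < s`, and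
`λ(A_J) = s + t − 2` when `s ≤ |J| ≤ m − t + 1`; (iii) if `|J| > m−s` then
`λ(A_J) = m − s + t`. -/
theorem statement16 {α : Type u} (s t m : ℕ) (hs : 0 < s) (ht : 0 < t)
    (M : Matroid α) (A : Fin m → Set α) (hA : M.IsSpike s t A)
    (J K : Finset (Fin m)) (hK : K = Jᶜ) (hcard : J.card ≤ K.card) :
    (J.card ≤ t - 1 → M.lam' (⋃ j ∈ J, A j) = M.rk' (⋃ j ∈ J, A j)) ∧
    (t - 1 ≤ J.card → J.card ≤ m - s →
      (J.card < s → M.lam' (⋃ j ∈ J, A j) = t + J.card - 1) ∧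
      (s ≤ J.card → J.card ≤ m - t + 1 → M.lam' (⋃ j ∈ J, A j) = s + t - 2)) ∧
    (m - s < J.card → M.lam' (⋃ j ∈ J, A j) = m - s + t) := by
  classical
  have hsm : s ≤ m := le_trans (le_max_left _ _) hA.1
  have htm : t ≤ m := le_trans (le_max_right _ _) hA.1
  have hstm := SpikeAux.hm_bound hA hs ht
  have hJU : (⋃ j ∈ J, A j) = SpikeAux.USet A J := rfl
  have hJm : J.card ≤ m := by
    have := Finset.card_le_card J.subset_univ
    rwa [Finset.card_univ, Fintype.card_fin] at this
  have hKcard : J.card + K.card = m := by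
    subst hK
    rw [Finset.card_compl, Fintype.card_fin]
    omega
  have hcompl : M.E \ SpikeAux.USet A J = SpikeAux.USet A K := by
    rw [SpikeAux.compl_USet hA, hK]
  have hg := SpikeAux.rk'_ground_spike hA hs ht
  have hlam : M.lam' (⋃ j ∈ J, A j) =
      M.rk' (SpikeAux.USet A J) + M.rk' (SpikeAux.USet A K) - M.rk' M.E := by
    rw [Matroid.lam', hJU, hcompl]
  refine ⟨?_, ?_, ?_⟩
  · intro h
    have hsp : M.Spanning (SpikeAux.USet A K) := by
      rw [hK]; exact SpikeAux.spanning_USet hA (by omega)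
    rw [hlam, hJU, SpikeAux.rk'_spanning_eq hsp (SpikeAux.ground_finite hA)]
    omega
  · intro h1 h2
    have hrK : M.rk' (SpikeAux.USet A K) + 1 = K.card + s :=
      SpikeAux.rk'_USet_mid hA hs ht (by omega) (by omega)
    constructor
    · intro h3
      have hrJ : M.rk' (SpikeAux.USet A J) = 2 * J.card := SpikeAux.rk'_USet_small hA h3
      rw [hlam, hrJ]
      omega
    · intro h3 h4
      have hrJ : M.rk' (SpikeAux.USet A J) + 1 = J.card + s :=
        SpikeAux.rk'_USet_mid hA hs ht (by omega) (by omega)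
      rw [hlam]
      omega
  · intro h
    have h1 : J.card < s := by omega
    have h2 : K.card < s := by omega
    rw [hlam, SpikeAux.rk'_USet_small hA h1, SpikeAux.rk'_USet_small hA h2]
    omega
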